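/- Let G be a Dyck graph on vertex set [n] and H its restriction to [n-1]. For any permutation sigma of [n-1], the sum over the n permutations tau obtained by inserting the letter n into sigma of t^{st_G(tau)} equals (1 + t + ... + t^{n-1}) times t^{st_H(sigma)}. -/

import Mathlib

open scoped Classical

/-- A Dyck graph: if `(i,j)` is an edge then so is every `(i',j')` with
`i ≤ i' < j' ≤ j`. -/
def DyckGraph {n : ℕ} (G : SimpleGraph (Fin n)) : Prop :=
  ∀ i j i' j' : Fin n, G.Adj i j → i ≤ i' → i' < j' → j' ≤ j → G.Adj i' j'

/-- `inv_G(σ)`: the number of edges `(i < j)` of `G` such that `i` is to the right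
of `j` in the one-line notation of `σ`. -/
noncomputable def invG {n : ℕ} (G : SimpleGraph (Fin n)) (σ : Equiv.Perm (Fin n)) : ℕ :=
  (Finset.univ.filter fun p : Fin n × Fin n =>
    p.1 < p.2 ∧ G.Adj p.1 p.2 ∧ σ⁻¹ p.2 < σ⁻¹ p.1).card

/-- `maj_G(σ)`: the sum of the (1-based) positions `i` such that `σ_i > σ_{i+1}`
and `(σ_{i+1}, σ_i)` is not an edge of `G`. -/
noncomputable def majG {n : ℕ} (G : SimpleGraph (Fin n)) (σ : Equiv.Perm (Fin n)) : ℕ :=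
  ∑ k ∈ Finset.range n,
    if h : k + 1 < n then
      (if σ ⟨k + 1, h⟩ < σ ⟨k, Nat.lt_of_succ_lt h⟩ ∧
          ¬ G.Adj (σ ⟨k + 1, h⟩) (σ ⟨k, Nat.lt_of_succ_lt h⟩) then k + 1 else 0)
    else 0

/-- The Mahonian statistic `st_G = inv_G + maj_G`. -/
noncomputable def stG {n : ℕ} (G : SimpleGraph (Fin n)) (σ : Equiv.Perm (Fin n)) : ℕ :=
  invG G σ + majG G σ

/-- `τ : S_{m+1}` restricts (after deleting the maximal value) to `σ : S_m`:
the word obtained from the one-line notation of `τ` by removing the letter `m`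
(the largest value) is the one-line notation of `σ`. -/
def Restricts {m : ℕ} (τ : Equiv.Perm (Fin (m + 1))) (σ : Equiv.Perm (Fin m)) : Prop :=
  ∀ i : Fin m, ((τ ((τ⁻¹ (Fin.last m)).succAbove i) : Fin (m + 1)) : ℕ) = (σ i : ℕ)

namespace Stmt6Aux
open Finset Fin

variable {m : ℕ}

lemma perm_inv_apply_self {α : Type*} (f : Equiv.Perm α) (x : α) : f⁻¹ (f x) = x := by
  simp only [Equiv.Perm.coe_inv, Equiv.symm_apply_apply]

lemma perm_apply_inv_self {α : Type*} (f : Equiv.Perm α) (x : α) : f (f⁻¹ x) = x := by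
  simp only [Equiv.Perm.coe_inv, Equiv.apply_symm_apply]

/-! ### The insertion permutations -/

noncomputable def tau (σ : Equiv.Perm (Fin m)) (p : Fin (m + 1)) : Equiv.Perm (Fin (m + 1)) :=
  (finSuccEquiv' p).trans ((σ.optionCongr).trans (finSuccEquiv' (Fin.last m)).symm)

variable (σ : Equiv.Perm (Fin m)) (p : Fin (m + 1))

lemma tau_self : tau σ p p = Fin.last m := by
  simp [tau, finSuccEquiv'_at, finSuccEquiv'_symm_none]

lemma tau_succAbove (i : Fin m) : tau σ p (p.succAbove i) = Fin.castSucc (σ i) := by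
  simp [tau, finSuccEquiv'_succAbove, finSuccEquiv'_symm_some, Fin.succAbove_last]

lemma tau_inv_last : (tau σ p)⁻¹ (Fin.last m) = p := by
  rw [← tau_self σ p, perm_inv_apply_self]

lemma tau_inv_castSucc (a : Fin m) : (tau σ p)⁻¹ (Fin.castSucc a) = p.succAbove (σ⁻¹ a) := by
  apply (tau σ p).injective
  rw [perm_apply_inv_self, tau_succAbove, perm_apply_inv_self]

lemma restricts_tau : Restricts (tau σ p) σ := by
  intro i
  rw [tau_inv_last, tau_succAbove]
  simp

lemma eq_tau_of_restricts {τ : Equiv.Perm (Fin (m + 1))} (h : Restricts τ σ) :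
    τ = tau σ (τ⁻¹ (Fin.last m)) := by
  set p := τ⁻¹ (Fin.last m) with hp
  apply Equiv.ext
  intro x
  rcases eq_or_ne x p with rfl | hx
  · rw [tau_self]
    simp [hp]
  · obtain ⟨i, hi⟩ := Fin.exists_succAbove_eq hx
    rw [← hi, tau_succAbove]
    have := h i
    exact Fin.ext (by rw [this]; simp)

lemma sum_restricts {M : Type*} [AddCommMonoid M] (f : Equiv.Perm (Fin (m + 1)) → M) :
    ∑ τ : Equiv.Perm (Fin (m + 1)), (if Restricts τ σ then f τ else 0) =
      ∑ p : Fin (m + 1), f (tau σ p) := by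
  rw [← Finset.sum_filter]
  refine Finset.sum_nbij' (fun τ => τ⁻¹ (Fin.last m)) (fun p => tau σ p) ?_ ?_ ?_ ?_ ?_
  · intro τ hτ; exact Finset.mem_univ _
  · intro p hp
    simp only [Finset.mem_filter, Finset.mem_univ, true_and]
    exact restricts_tau σ p
  · intro τ hτ
    simp only [Finset.mem_filter, Finset.mem_univ, true_and] at hτ
    exact (eq_tau_of_restricts σ hτ).symm
  · intro p hp; exact tau_inv_last σ p
  · intro τ hτ
    simp only [Finset.mem_filter, Finset.mem_univ, true_and] at hτ
    rw [← eq_tau_of_restricts σ hτ]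

/-! ### Pointwise values of `tau` -/

lemma tau_apply_of_lt {k : ℕ} (hk : k < m) (hkp : k < (p : ℕ)) :
    tau σ p ⟨k, Nat.lt_succ_of_lt hk⟩ = Fin.castSucc (σ ⟨k, hk⟩) := by
  have h1 : p.succAbove ⟨k, hk⟩ = ⟨k, Nat.lt_succ_of_lt hk⟩ := by
    rw [Fin.succAbove_of_castSucc_lt]
    · rfl
    · rw [Fin.lt_def]; exact hkp
  rw [← h1, tau_succAbove]

lemma tau_apply_of_gt {k : ℕ} (hk : k < m + 1) (hkp : (p : ℕ) < k) :
    tau σ p ⟨k, hk⟩ = Fin.castSucc (σ ⟨k - 1, by omega⟩) := by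
  have h1 : p.succAbove ⟨k - 1, by omega⟩ = ⟨k, hk⟩ := by
    rw [Fin.succAbove_of_le_castSucc]
    · apply Fin.ext; simp [Fin.val_succ]; omega
    · rw [Fin.le_def]; simp; omega
  rw [← h1, tau_succAbove]

lemma tau_apply_self' {k : ℕ} (hk : k < m + 1) (hkp : k = (p : ℕ)) :
    tau σ p ⟨k, hk⟩ = Fin.last m := by
  have : (⟨k, hk⟩ : Fin (m + 1)) = p := Fin.ext hkp
  rw [this, tau_self]

lemma lt_succAbove_iff' (j : Fin m) : p < p.succAbove j ↔ (p : ℕ) ≤ (j : ℕ) := by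
  rcases lt_or_ge (Fin.castSucc j) p with h | h
  · rw [Fin.succAbove_of_castSucc_lt _ _ h]
    rw [Fin.lt_def] at h ⊢
    simp at h ⊢
    omega
  · rw [Fin.succAbove_of_le_castSucc _ _ h]
    rw [Fin.le_def] at h
    rw [Fin.lt_def]
    simp at h ⊢

/-! ### Descent/inversion bookkeeping sets -/

variable (G : SimpleGraph (Fin (m + 1)))

noncomputable def Sset : Finset ℕ :=
  (Finset.range m).filter fun i =>
    ∃ h : i < m, G.Adj (Fin.castSucc (σ ⟨i, h⟩)) (Fin.last m)

/-- The graphical descent predicate for `σ` (positions, 0-based). -/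
def Dp (k : ℕ) : Prop :=
  ∃ h : k + 1 < m,
    σ ⟨k + 1, h⟩ < σ ⟨k, by omega⟩ ∧
    ¬ G.Adj (Fin.castSucc (σ ⟨k + 1, h⟩)) (Fin.castSucc (σ ⟨k, by omega⟩))

noncomputable def Dset : Finset ℕ := (Finset.range m).filter (Dp σ G)

noncomputable def Cval (p : ℕ) : ℕ :=
  if h : p < m then
    (if G.Adj (Fin.castSucc (σ ⟨p, h⟩)) (Fin.last m) then 0 else p + 1) else 0

lemma S_lt : ∀ i ∈ Sset σ G, i < m := fun i hi =>
  Finset.mem_range.mp (Finset.mem_filter.mp hi).1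

lemma D_lt1 : ∀ i ∈ Dset σ G, i + 1 < m := by
  intro i hi
  obtain ⟨h, -⟩ := (Finset.mem_filter.mp hi).2
  exact h

lemma factA (hG : DyckGraph G) : ∀ i ∈ Dset σ G, i + 1 ∉ Sset σ G := by
  intro i hi hmem
  obtain ⟨h1, hlt, hnadj⟩ := (Finset.mem_filter.mp hi).2
  obtain ⟨h2, hadj⟩ := (Finset.mem_filter.mp hmem).2
  exact hnadj (hG _ _ _ _ hadj le_rfl (Fin.castSucc_lt_castSucc_iff.mpr hlt) (Fin.le_last _))

/-! ### The inversion count of `tau σ p` -/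

lemma inv_part_last :
    ((Finset.univ : Finset (Fin (m+1) × Fin (m+1))).filter fun q =>
        (q.1 < q.2 ∧ G.Adj q.1 q.2 ∧ (tau σ p)⁻¹ q.2 < (tau σ p)⁻¹ q.1) ∧ q.2 = Fin.last m).card
      = ((Sset σ G).filter (fun i => (p : ℕ) ≤ i)).card := by
  refine Finset.card_bij' (fun q hq =>
      ((σ⁻¹ (q.1.castPred (by
          simp only [Finset.mem_filter, Finset.mem_univ, true_and] at hq
          exact Fin.ne_last_of_lt (hq.2 ▸ hq.1.1))) : Fin m) : ℕ))
    (fun i hi => (Fin.castSucc (σ ⟨i, by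
        simp only [Sset, Finset.mem_filter, Finset.mem_range] at hi
        exact hi.1.1⟩), Fin.last m)) ?_ ?_ ?_ ?_
  · intro q hq
    simp only [Finset.mem_filter, Finset.mem_univ, true_and] at hq
    obtain ⟨⟨h1, h2, h3⟩, h4⟩ := hq
    simp only [Sset, Finset.mem_filter, Finset.mem_range]
    refine ⟨⟨(σ⁻¹ _).isLt, (σ⁻¹ _).isLt, ?_⟩, ?_⟩
    · rw [Fin.eta, perm_apply_inv_self, Fin.castSucc_castPred]
      rwa [h4] at h2
    · rw [h4, tau_inv_last] at h3
      have h5 : q.1 = Fin.castSucc (q.1.castPred (Fin.ne_last_of_lt (h4 ▸ h1))) :=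
        (Fin.castSucc_castPred _ _).symm
      rw [h5, tau_inv_castSucc] at h3
      exact (lt_succAbove_iff' p _).mp h3
  · intro i hi
    simp only [Sset, Finset.mem_filter, Finset.mem_range] at hi
    obtain ⟨⟨him, h, hadj⟩, hpi⟩ := hi
    simp only [Finset.mem_filter, Finset.mem_univ, true_and]
    refine ⟨⟨Fin.castSucc_lt_last _, hadj, ?_⟩, trivial⟩
    rw [tau_inv_last, tau_inv_castSucc, perm_inv_apply_self]
    exact (lt_succAbove_iff' p _).mpr hpi
  · intro q hq
    simp only [Finset.mem_filter, Finset.mem_univ, true_and] at hq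
    obtain ⟨⟨h1, h2, h3⟩, h4⟩ := hq
    refine Prod.ext ?_ ?_
    · simp only [Fin.eta, perm_apply_inv_self, Fin.castSucc_castPred]
    · exact h4.symm
  · intro i hi
    simp only [Sset, Finset.mem_filter, Finset.mem_range] at hi
    simp [Fin.castPred_castSucc, perm_inv_apply_self]

lemma inv_part_rest :
    ((Finset.univ : Finset (Fin (m+1) × Fin (m+1))).filter fun q =>
        (q.1 < q.2 ∧ G.Adj q.1 q.2 ∧ (tau σ p)⁻¹ q.2 < (tau σ p)⁻¹ q.1) ∧ ¬(q.2 = Fin.last m)).card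
      = invG (G.comap Fin.castSucc) σ := by
  unfold invG
  refine Finset.card_bij' (fun q hq =>
      ((q.1.castPred (by
          simp only [Finset.mem_filter, Finset.mem_univ, true_and] at hq
          exact Fin.ne_last_of_lt (lt_of_lt_of_le hq.1.1
            (Fin.le_last _)))),
       (q.2.castPred (by
          simp only [Finset.mem_filter, Finset.mem_univ, true_and] at hq
          exact hq.2))))
    (fun q _ => (Fin.castSucc q.1, Fin.castSucc q.2)) ?_ ?_ ?_ ?_
  · intro q hq
    simp only [Finset.mem_filter, Finset.mem_univ, true_and] at hq ⊢
    obtain ⟨⟨h1, h2, h3⟩, h4⟩ := hq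
    refine ⟨?_, ?_, ?_⟩
    · rw [← Fin.castSucc_lt_castSucc_iff, Fin.castSucc_castPred, Fin.castSucc_castPred]
      exact h1
    · simp only [SimpleGraph.comap_adj]
      rw [Fin.castSucc_castPred, Fin.castSucc_castPred]
      exact h2
    · rw [← Fin.succAbove_lt_succAbove_iff (p := p), ← tau_inv_castSucc, ← tau_inv_castSucc,
        Fin.castSucc_castPred, Fin.castSucc_castPred]
      exact h3
  · intro q hq
    simp only [Finset.mem_filter, Finset.mem_univ, true_and] at hq ⊢
    obtain ⟨h1, h2, h3⟩ := hq
    refine ⟨⟨?_, ?_, ?_⟩, ?_⟩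
    · rwa [Fin.castSucc_lt_castSucc_iff]
    · simpa [SimpleGraph.comap_adj] using h2
    · rw [tau_inv_castSucc, tau_inv_castSucc]
      rwa [Fin.succAbove_lt_succAbove_iff]
    · exact Fin.ne_last_of_lt (Fin.castSucc_lt_last _)
  · intro q hq
    refine Prod.ext ?_ ?_ <;> simp [Fin.castSucc_castPred]
  · intro q hq
    refine Prod.ext ?_ ?_ <;> simp [Fin.castPred_castSucc]

lemma inv_tau :
    invG G (tau σ p) =
      invG (G.comap Fin.castSucc) σ + ((Sset σ G).filter (fun i => (p : ℕ) ≤ i)).card := by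
  have hinv : invG G (tau σ p) =
      ((Finset.univ : Finset (Fin (m+1) × Fin (m+1))).filter fun q =>
        q.1 < q.2 ∧ G.Adj q.1 q.2 ∧ (tau σ p)⁻¹ q.2 < (tau σ p)⁻¹ q.1).card := rfl
  have hsplit := Finset.card_filter_add_card_filter_not
    (s := (Finset.univ : Finset (Fin (m+1) × Fin (m+1))).filter fun q =>
      q.1 < q.2 ∧ G.Adj q.1 q.2 ∧ (tau σ p)⁻¹ q.2 < (tau σ p)⁻¹ q.1)
    (p := fun q => q.2 = Fin.last m)
  rw [Finset.filter_filter, Finset.filter_filter] at hsplit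
  rw [hinv, ← hsplit, inv_part_last σ p G, inv_part_rest σ p G, add_comm]

/-! ### The major index of `tau σ p` -/

lemma maj_sigma :
    majG (G.comap Fin.castSucc) σ = ∑ i ∈ Dset σ G, (i + 1) := by
  unfold majG Dset
  rw [Finset.sum_filter]
  apply Finset.sum_congr rfl
  intro k hk
  by_cases h : k + 1 < m
  · rw [dif_pos h]
    apply if_congr _ rfl rfl
    constructor
    · rintro ⟨h1, h2⟩
      exact ⟨h, h1, by simpa [SimpleGraph.comap_adj] using h2⟩
    · rintro ⟨h', h1, h2⟩
      exact ⟨h1, by simpa [SimpleGraph.comap_adj] using h2⟩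
  · rw [dif_neg h, if_neg]
    rintro ⟨h', -⟩
    exact h h'

/-- The descent predicate of `tau σ p` at position `k` (ℕ version). -/
def Qd (k : ℕ) : Prop :=
  ∃ h : k + 1 < m + 1,
    tau σ p ⟨k + 1, h⟩ < tau σ p ⟨k, by omega⟩ ∧
    ¬ G.Adj (tau σ p ⟨k + 1, h⟩) (tau σ p ⟨k, by omega⟩)

lemma Qd_iff_left {k : ℕ} (hk : k + 1 < (p : ℕ)) (hk2 : k + 1 < m) :
    Qd σ p G k ↔ Dp σ G k := by
  have e1 : tau σ p ⟨k + 1, by omega⟩ = Fin.castSucc (σ ⟨k + 1, hk2⟩) :=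
    tau_apply_of_lt σ p hk2 hk
  have e0 : tau σ p ⟨k, by omega⟩ = Fin.castSucc (σ ⟨k, by omega⟩) :=
    tau_apply_of_lt σ p (by omega) (by omega)
  constructor
  · rintro ⟨h', hlt, hadj⟩
    rw [e1, e0] at hlt hadj
    exact ⟨hk2, Fin.castSucc_lt_castSucc_iff.mp hlt, hadj⟩
  · rintro ⟨h', hlt, hadj⟩
    refine ⟨by omega, ?_, ?_⟩
    · rw [e1, e0]
      exact Fin.castSucc_lt_castSucc_iff.mpr hlt
    · rw [e1, e0]
      exact hadj

lemma Qd_succ_iff {i : ℕ} (hpi : (p : ℕ) ≤ i) (him : i + 1 < m) :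
    Qd σ p G (i + 1) ↔ Dp σ G i := by
  have e1 : tau σ p ⟨i + 1 + 1, by omega⟩ = Fin.castSucc (σ ⟨i + 1, him⟩) :=
    tau_apply_of_gt σ p (by omega) (by omega)
  have e0 : tau σ p ⟨i + 1, by omega⟩ = Fin.castSucc (σ ⟨i, by omega⟩) :=
    tau_apply_of_gt σ p (by omega) (by omega)
  constructor
  · rintro ⟨h', hlt, hadj⟩
    rw [e1, e0] at hlt hadj
    exact ⟨him, Fin.castSucc_lt_castSucc_iff.mp hlt, hadj⟩
  · rintro ⟨h', hlt, hadj⟩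
    refine ⟨by omega, ?_, ?_⟩
    · rw [e1, e0]
      exact Fin.castSucc_lt_castSucc_iff.mpr hlt
    · rw [e1, e0]
      exact hadj

lemma notQd_pred (hp1 : 1 ≤ (p : ℕ)) (hpm : (p : ℕ) ≤ m) : ¬ Qd σ p G ((p : ℕ) - 1) := by
  rintro ⟨h', hlt, -⟩
  have e : tau σ p ⟨(p : ℕ) - 1 + 1, h'⟩ = Fin.last m := tau_apply_self' σ p h' (by omega)
  rw [e] at hlt
  exact absurd hlt (Fin.not_lt.mpr (Fin.le_last _))

lemma Qd_at_p (hpm' : (p : ℕ) < m) :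
    (if Qd σ p G (p : ℕ) then (p : ℕ) + 1 else 0) = Cval σ G (p : ℕ) := by
  have e0 : tau σ p ⟨(p : ℕ), by omega⟩ = Fin.last m := tau_apply_self' σ p (by omega) rfl
  have e1 : tau σ p ⟨(p : ℕ) + 1, by omega⟩ = Fin.castSucc (σ ⟨(p : ℕ), hpm'⟩) :=
    tau_apply_of_gt σ p (by omega) (by omega)
  have hq : Qd σ p G (p : ℕ) ↔ ¬ G.Adj (Fin.castSucc (σ ⟨(p : ℕ), hpm'⟩)) (Fin.last m) := by
    constructor
    · rintro ⟨h', hlt, hadj⟩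
      rw [e1, e0] at hadj
      exact hadj
    · intro hadj
      refine ⟨by omega, ?_, ?_⟩
      · rw [e1, e0]
        exact Fin.castSucc_lt_last _
      · rw [e1, e0]
        exact hadj
  unfold Cval
  rw [dif_pos hpm']
  by_cases ha : G.Adj (Fin.castSucc (σ ⟨(p : ℕ), hpm'⟩)) (Fin.last m)
  · rw [if_pos ha, if_neg (by rw [hq]; exact not_not_intro ha)]
  · rw [if_neg ha, if_pos (hq.mpr ha)]

lemma maj_tau :
    majG G (tau σ p) =
      (∑ i ∈ (Dset σ G).filter (fun i => i + 1 < (p : ℕ)), (i + 1)) +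
      ((∑ i ∈ (Dset σ G).filter (fun i => (p : ℕ) ≤ i), (i + 2)) + Cval σ G (p : ℕ)) := by
  have hpm : (p : ℕ) ≤ m := Nat.lt_succ_iff.mp p.isLt
  have hmaj : majG G (tau σ p) = ∑ k ∈ Finset.range m, (if Qd σ p G k then k + 1 else 0) := by
    unfold majG
    rw [Finset.sum_range_succ, dif_neg (lt_irrefl (m + 1)), add_zero]
    apply Finset.sum_congr rfl
    intro k hk
    rw [Finset.mem_range] at hk
    rw [dif_pos (by omega : k + 1 < m + 1)]
    apply if_congr _ rfl rfl
    constructor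
    · rintro ⟨h1, h2⟩; exact ⟨by omega, h1, h2⟩
    · rintro ⟨h', h1, h2⟩; exact ⟨h1, h2⟩
  rw [hmaj, ← Finset.sum_filter_add_sum_filter_not (Finset.range m) (fun k => k + 1 < (p : ℕ)),
    ← Finset.sum_filter_add_sum_filter_not
      ((Finset.range m).filter (fun k => ¬(k + 1 < (p : ℕ)))) (fun k => (p : ℕ) < k)]
  congr 1
  · -- positions strictly left of the insertion point
    have hcong : ∀ x ∈ (Finset.range m).filter (fun k => k + 1 < (p : ℕ)),
        (if Qd σ p G x then x + 1 else 0) = (if Dp σ G x then x + 1 else 0) := by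
      intro x hx
      simp only [Finset.mem_filter, Finset.mem_range] at hx
      exact if_congr (Qd_iff_left σ p G hx.2 (by omega)) rfl rfl
    rw [Finset.sum_congr rfl hcong, ← Finset.sum_filter, Finset.filter_comm]
    rfl
  congr 1
  · -- positions strictly right of the insertion point
    rw [Finset.filter_filter]
    have hdom : (Finset.range m).filter (fun k => ¬(k + 1 < (p : ℕ)) ∧ (p : ℕ) < k) =
        (Finset.range m).filter (fun k => (p : ℕ) < k) := by
      apply Finset.filter_congr
      intro x hx
      constructor
      · rintro ⟨-, h⟩; exact h
      · intro h; exact ⟨by omega, h⟩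
    rw [hdom]
    have e3 : ∑ i ∈ (Dset σ G).filter (fun i => (p : ℕ) ≤ i), (i + 2) =
        ∑ i ∈ (Finset.range m).filter (fun i => (p : ℕ) ≤ i ∧ i + 1 < m),
          (if Dp σ G i then i + 2 else 0) := by
      rw [← Finset.sum_filter]
      congr 1
      ext i
      simp only [Dset, Finset.mem_filter, Finset.mem_range]
      constructor
      · intro h
        obtain ⟨hx, -⟩ := h.1.2
        exact ⟨⟨h.1.1, h.2, hx⟩, h.1.2⟩
      · intro h
        exact ⟨⟨h.1.1, h.2⟩, h.1.2.1⟩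
    rw [e3]
    refine (Finset.sum_bij' (fun i _ => i + 1) (fun k _ => k - 1) ?_ ?_ ?_ ?_ ?_).symm
    · intro i hi
      simp only [Finset.mem_filter, Finset.mem_range] at hi ⊢
      omega
    · intro k hk
      simp only [Finset.mem_filter, Finset.mem_range] at hk ⊢
      omega
    · intro i hi
      simp
    · intro k hk
      simp only [Finset.mem_filter, Finset.mem_range] at hk
      show k - 1 + 1 = k
      omega
    · intro i hi
      simp only [Finset.mem_filter, Finset.mem_range] at hi
      exact (if_congr (Qd_succ_iff σ p G hi.2.1 hi.2.2) rfl rfl).symm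
  · -- the two positions adjacent to the insertion point
    rw [Finset.filter_filter]
    rcases Nat.eq_zero_or_pos m with hm0 | hm0
    · subst hm0
      have hp0 : (p : ℕ) = 0 := by omega
      rw [Finset.range_zero, Finset.filter_empty, Finset.sum_empty]
      unfold Cval
      rw [hp0, dif_neg (by omega)]
    rcases Nat.eq_zero_or_pos (p : ℕ) with hp0 | hp1
    · -- p = 0
      have hM : (Finset.range m).filter (fun k => ¬(k + 1 < (p : ℕ)) ∧ ¬((p : ℕ) < k)) = {0} := by
        ext x
        simp only [Finset.mem_filter, Finset.mem_range, Finset.mem_singleton]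
        omega
      rw [hM, Finset.sum_singleton]
      have := Qd_at_p σ p G (by omega)
      rwa [hp0] at this ⊢
    rcases eq_or_lt_of_le hpm with hpm' | hpm'
    · -- p = m (and p ≥ 1)
      have hM : (Finset.range m).filter (fun k => ¬(k + 1 < (p : ℕ)) ∧ ¬((p : ℕ) < k)) =
          {(p : ℕ) - 1} := by
        ext x
        simp only [Finset.mem_filter, Finset.mem_range, Finset.mem_singleton]
        omega
      rw [hM, Finset.sum_singleton, if_neg (notQd_pred σ p G hp1 hpm)]
      unfold Cval
      rw [dif_neg (by omega)]
    · -- 1 ≤ p < m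
      have hM : (Finset.range m).filter (fun k => ¬(k + 1 < (p : ℕ)) ∧ ¬((p : ℕ) < k)) =
          insert ((p : ℕ) - 1) {(p : ℕ)} := by
        ext x
        simp only [Finset.mem_filter, Finset.mem_range, Finset.mem_insert, Finset.mem_singleton]
        omega
      rw [hM, Finset.sum_insert (by simp; omega), Finset.sum_singleton,
        if_neg (notQd_pred σ p G hp1 hpm), zero_add, Qd_at_p σ p G hpm']

end Stmt6Aux

namespace Stmt6Aux
open Finset

variable (m : ℕ) (S D : Finset ℕ)

noncomputable def Ust : Finset ℕ := S ∪ D.image (· + 1)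

noncomputable def cfn (p : ℕ) : ℕ :=
  if p = m then 0
  else if p ∈ Ust S D then ((Ust S D).filter (fun i => p ≤ i)).card
  else (Ust S D).card + 1 + ((Finset.range p).filter (fun i => i ∉ Ust S D)).card

variable {m S D}

lemma keyL (hS : ∀ i ∈ S, i < m) (hD : ∀ i ∈ D, i + 1 < m) (hA : ∀ i ∈ D, i + 1 ∉ S)
    {p : ℕ} (hp : p ≤ m) :
    (S.filter (fun i => p ≤ i)).card + (D.filter (fun i => p ≤ i)).card +
        (if p < m then (if p ∈ S then 0 else p + 1) else 0) =
      p * (D.filter (fun i => i + 1 = p)).card + cfn m S D p := by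
  have hdisj : Disjoint S (D.image (· + 1)) := by
    rw [Finset.disjoint_right]
    intro a ha
    rw [Finset.mem_image] at ha
    obtain ⟨j, hj, rfl⟩ := ha
    exact hA j hj
  have hsU : ∀ q : ℕ, ((Ust S D).filter (fun i => q ≤ i)).card =
      (S.filter (fun i => q ≤ i)).card + ((D.image (· + 1)).filter (fun i => q ≤ i)).card := by
    intro q
    rw [Ust, Finset.filter_union, Finset.card_union_of_disjoint
      (Finset.disjoint_filter_filter hdisj)]
  have himgq : ∀ q : ℕ, ((D.image (· + 1)).filter (fun i => q ≤ i)).card =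
      (D.filter (fun i => i + 1 = q)).card + (D.filter (fun i => q ≤ i)).card := by
    intro q
    rw [Finset.filter_image]
    rw [Finset.card_image_of_injective _ (add_left_injective 1)]
    have hsplit : D.filter (fun a => q ≤ a + 1) =
        D.filter (fun i => i + 1 = q) ∪ D.filter (fun i => q ≤ i) := by
      rw [← Finset.filter_or]
      apply Finset.filter_congr
      intro x hx
      constructor
      · intro h; omega
      · intro h; omega
    rw [hsplit, Finset.card_union_of_disjoint]
    rw [Finset.disjoint_left]
    intro a ha ha'
    rw [Finset.mem_filter] at ha ha'
    omega
  rcases eq_or_lt_of_le hp with heq | hpm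
  · -- p = m
    have h1 : S.filter (fun i => p ≤ i) = ∅ := by
      apply Finset.filter_eq_empty_iff.mpr
      intro i hi
      have := hS i hi; omega
    have h2 : D.filter (fun i => p ≤ i) = ∅ := by
      apply Finset.filter_eq_empty_iff.mpr
      intro i hi
      have := hD i hi; omega
    have h3 : D.filter (fun i => i + 1 = p) = ∅ := by
      apply Finset.filter_eq_empty_iff.mpr
      intro i hi
      have := hD i hi; omega
    rw [h1, h2, h3, cfn, if_pos heq, if_neg (by omega : ¬ p < m)]
    simp
  · -- p < m
    have hpne : p ≠ m := by omega
    by_cases hpU : p ∈ Ust S D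
    · have hc : cfn m S D p = ((Ust S D).filter (fun i => p ≤ i)).card := by
        rw [cfn, if_neg hpne, if_pos hpU]
      by_cases hpS : p ∈ S
      · -- p ∈ S : no descent just before it
        have he : D.filter (fun i => i + 1 = p) = ∅ := by
          apply Finset.filter_eq_empty_iff.mpr
          intro i hi hip
          exact hA i hi (hip ▸ hpS)
        rw [hc, hsU, himgq, he, if_pos hpm, if_pos hpS]
        simp
      · -- p ∈ U \ S : p - 1 is a descent
        have hpI : p ∈ D.image (· + 1) := by
          rcases Finset.mem_union.mp hpU with h | h
          · exact absurd h hpS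
          · exact h
        obtain ⟨j, hj, hjp⟩ := Finset.mem_image.mp hpI
        have he : D.filter (fun i => i + 1 = p) = {j} := by
          ext x
          simp only [Finset.mem_filter, Finset.mem_singleton]
          constructor
          · rintro ⟨hx, hxp⟩; omega
          · rintro rfl; exact ⟨hj, hjp⟩
        rw [hc, hsU, himgq, he, if_pos hpm, if_neg hpS, Finset.card_singleton]
        omega
    · -- p ∉ U
      have hpS : p ∉ S := fun h => hpU (Finset.mem_union_left _ h)
      have he : D.filter (fun i => i + 1 = p) = ∅ := by
        apply Finset.filter_eq_empty_iff.mpr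
        intro i hi hip
        exact hpU (Finset.mem_union_right _ (Finset.mem_image.mpr ⟨i, hi, hip⟩))
      have hc : cfn m S D p =
          (Ust S D).card + 1 + ((Finset.range p).filter (fun i => i ∉ Ust S D)).card := by
        rw [cfn, if_neg hpne, if_neg hpU]
      have hUcard : ((Ust S D).filter (fun i => p ≤ i)).card +
          ((Ust S D).filter (fun i => ¬ p ≤ i)).card = (Ust S D).card :=
        Finset.card_filter_add_card_filter_not _
      have hUlt : (Ust S D).filter (fun i => ¬ p ≤ i) =
          (Finset.range p).filter (fun i => i ∈ Ust S D) := by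
        ext i
        simp only [Finset.mem_filter, Finset.mem_range]
        constructor
        · rintro ⟨h1, h2⟩; exact ⟨by omega, h1⟩
        · rintro ⟨h1, h2⟩; exact ⟨h2, by omega⟩
      have hrange : ((Finset.range p).filter (fun i => i ∈ Ust S D)).card +
          ((Finset.range p).filter (fun i => ¬ i ∈ Ust S D)).card = p := by
        rw [Finset.card_filter_add_card_filter_not, Finset.card_range]
      rw [hc, he, if_pos hpm, if_neg hpS]
      rw [hUlt, hsU, himgq, he] at hUcard
      simp only [Finset.card_empty] at *
      omega

lemma cfn_le (hU : ∀ i ∈ Ust S D, i < m) {p : ℕ} (hp : p ≤ m) : cfn m S D p ≤ m := by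
  have hUr : Ust S D ⊆ Finset.range m := fun i hi => Finset.mem_range.mpr (hU i hi)
  have hUcard : (Ust S D).card ≤ m := by
    have := Finset.card_le_card hUr
    rwa [Finset.card_range] at this
  rcases eq_or_lt_of_le hp with rfl | hpm
  · rw [cfn, if_pos rfl]; omega
  rw [cfn, if_neg (by omega : p ≠ m)]
  by_cases hpU : p ∈ Ust S D
  · rw [if_pos hpU]
    calc ((Ust S D).filter _).card ≤ (Ust S D).card := Finset.card_le_card (Finset.filter_subset _ _)
      _ ≤ m := hUcard
  · rw [if_neg hpU]
    have hUeq : (Finset.range m).filter (fun i => i ∈ Ust S D) = Ust S D := by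
      ext i
      simp only [Finset.mem_filter, Finset.mem_range]
      exact ⟨fun h => h.2, fun h => ⟨hU i h, h⟩⟩
    have hsd : (Finset.range m).filter (fun i => i ∉ Ust S D) = Finset.range m \ Ust S D := by
      ext i
      simp only [Finset.mem_filter, Finset.mem_sdiff]
    have hmsum : ((Finset.range m).filter (fun i => i ∉ Ust S D)).card = m - (Ust S D).card := by
      rw [hsd, Finset.card_sdiff_of_subset hUr, Finset.card_range]
    have hmem : p ∈ (Finset.range m).filter (fun i => ¬ i ∈ Ust S D) :=
      Finset.mem_filter.mpr ⟨Finset.mem_range.mpr hpm, hpU⟩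
    have hsub : (Finset.range p).filter (fun i => ¬ i ∈ Ust S D) ⊆
        ((Finset.range m).filter (fun i => ¬ i ∈ Ust S D)).erase p := by
      intro i hi
      rw [Finset.mem_filter, Finset.mem_range] at hi
      rw [Finset.mem_erase, Finset.mem_filter, Finset.mem_range]
      exact ⟨by omega, by omega, hi.2⟩
    have hpos : 0 < ((Finset.range m).filter (fun i => i ∉ Ust S D)).card :=
      Finset.card_pos.mpr ⟨p, hmem⟩
    have := Finset.card_le_card hsub
    rw [Finset.card_erase_of_mem hmem] at this
    rw [hmsum] at this hpos
    omega

lemma cfn_ne {p q : ℕ} (hU : ∀ i ∈ Ust S D, i < m) (hpq : p < q) (hq : q ≤ m) :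
    cfn m S D p ≠ cfn m S D q := by
  have hp : p < m := by omega
  have hp1 : 1 ≤ cfn m S D p := by
    rw [cfn, if_neg (by omega : p ≠ m)]
    by_cases hpU : p ∈ Ust S D
    · rw [if_pos hpU]
      have : p ∈ (Ust S D).filter (fun i => p ≤ i) := Finset.mem_filter.mpr ⟨hpU, le_refl p⟩
      have := Finset.card_pos.mpr ⟨p, this⟩
      omega
    · rw [if_neg hpU]; omega
  rcases eq_or_lt_of_le hq with heq | hqm
  · have h0 : cfn m S D q = 0 := by rw [cfn, if_pos heq]
    omega
  rw [cfn, if_neg (by omega : p ≠ m), cfn, if_neg (by omega : q ≠ m)]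
  by_cases hpU : p ∈ Ust S D <;> by_cases hqU : q ∈ Ust S D
  · rw [if_pos hpU, if_pos hqU]
    have hsub : (Ust S D).filter (fun i => q ≤ i) ⊆ (Ust S D).filter (fun i => p ≤ i) := by
      intro i hi
      rw [Finset.mem_filter] at hi ⊢
      exact ⟨hi.1, by omega⟩
    have hlt : ((Ust S D).filter (fun i => q ≤ i)).card <
        ((Ust S D).filter (fun i => p ≤ i)).card := by
      apply Finset.card_lt_card
      rw [Finset.ssubset_iff_of_subset hsub]
      exact ⟨p, Finset.mem_filter.mpr ⟨hpU, le_refl p⟩,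
        fun h => by rw [Finset.mem_filter] at h; omega⟩
    omega
  · rw [if_pos hpU, if_neg hqU]
    have : ((Ust S D).filter (fun i => p ≤ i)).card ≤ (Ust S D).card :=
      Finset.card_le_card (Finset.filter_subset _ _)
    omega
  · rw [if_neg hpU, if_pos hqU]
    have : ((Ust S D).filter (fun i => q ≤ i)).card ≤ (Ust S D).card :=
      Finset.card_le_card (Finset.filter_subset _ _)
    omega
  · rw [if_neg hpU, if_neg hqU]
    have hsub : (Finset.range p).filter (fun i => i ∉ Ust S D) ⊆
        (Finset.range q).filter (fun i => i ∉ Ust S D) := by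
      intro i hi
      rw [Finset.mem_filter, Finset.mem_range] at hi ⊢
      exact ⟨by omega, hi.2⟩
    have hlt : ((Finset.range p).filter (fun i => i ∉ Ust S D)).card <
        ((Finset.range q).filter (fun i => i ∉ Ust S D)).card := by
      apply Finset.card_lt_card
      rw [Finset.ssubset_iff_of_subset hsub]
      exact ⟨p, Finset.mem_filter.mpr ⟨Finset.mem_range.mpr hpq, hpU⟩,
        fun h => by rw [Finset.mem_filter, Finset.mem_range] at h; omega⟩
    omega

lemma sum_pow_cfn (hU : ∀ i ∈ Ust S D, i < m) :
    ∑ p ∈ Finset.range (m + 1), (Polynomial.X : Polynomial ℚ) ^ (cfn m S D p) =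
      ∑ k ∈ Finset.range (m + 1), (Polynomial.X : Polynomial ℚ) ^ k := by
  have hinj : ∀ x ∈ Finset.range (m + 1), ∀ y ∈ Finset.range (m + 1),
      cfn m S D x = cfn m S D y → x = y := by
    intro x hx y hy hxy
    rw [Finset.mem_range] at hx hy
    rcases lt_trichotomy x y with h | h | h
    · exact absurd hxy (cfn_ne hU h (by omega))
    · exact h
    · exact absurd hxy.symm (cfn_ne hU h (by omega))
  have hsub : (Finset.range (m + 1)).image (cfn m S D) ⊆ Finset.range (m + 1) := by
    intro x hx
    rw [Finset.mem_image] at hx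
    obtain ⟨p, hp, rfl⟩ := hx
    rw [Finset.mem_range] at hp ⊢
    have := cfn_le hU (by omega : p ≤ m)
    omega
  have hcard : ((Finset.range (m + 1)).image (cfn m S D)).card = m + 1 := by
    rw [Finset.card_image_of_injOn (fun x hx y hy h => hinj x (by simpa using hx) y
      (by simpa using hy) h), Finset.card_range]
  have himg : (Finset.range (m + 1)).image (cfn m S D) = Finset.range (m + 1) :=
    Finset.eq_of_subset_of_card_le hsub (by rw [hcard, Finset.card_range])
  calc ∑ p ∈ Finset.range (m + 1), (Polynomial.X : Polynomial ℚ) ^ (cfn m S D p)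
      = ∑ k ∈ (Finset.range (m + 1)).image (cfn m S D), (Polynomial.X : Polynomial ℚ) ^ k :=
        (Finset.sum_image hinj).symm
    _ = ∑ k ∈ Finset.range (m + 1), (Polynomial.X : Polynomial ℚ) ^ k := by rw [himg]

/-! ### The statistic of `tau σ p` -/

variable {m : ℕ} (σ : Equiv.Perm (Fin m)) (p : Fin (m + 1)) (G : SimpleGraph (Fin (m + 1)))

lemma Cval_eq (hp : (p : ℕ) ≤ m) :
    Cval σ G (p : ℕ) =
      if (p : ℕ) < m then (if (p : ℕ) ∈ Sset σ G then 0 else (p : ℕ) + 1) else 0 := by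
  by_cases h : (p : ℕ) < m
  · rw [Cval, dif_pos h, if_pos h]
    apply if_congr _ rfl rfl
    constructor
    · intro hadj
      exact Finset.mem_filter.mpr ⟨Finset.mem_range.mpr h, h, hadj⟩
    · intro hs
      obtain ⟨h', hadj⟩ := (Finset.mem_filter.mp hs).2
      exact hadj
  · rw [Cval, dif_neg h, if_neg h]

lemma st_tau (hG : DyckGraph G) :
    stG G (tau σ p) =
      stG (G.comap Fin.castSucc) σ + cfn m (Sset σ G) (Dset σ G) (p : ℕ) := by
  have hpm : (p : ℕ) ≤ m := Nat.lt_succ_iff.mp p.isLt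
  have hinv := inv_tau σ p G
  have hmajt := maj_tau σ p G
  have hmajs := maj_sigma σ G
  have hsplitD : ∑ i ∈ Dset σ G, (i + 1) =
      (∑ i ∈ (Dset σ G).filter (fun i => i + 1 < (p : ℕ)), (i + 1)) +
      ((∑ i ∈ (Dset σ G).filter (fun i => i + 1 = (p : ℕ)), (i + 1)) +
       (∑ i ∈ (Dset σ G).filter (fun i => (p : ℕ) ≤ i), (i + 1))) := by
    rw [← Finset.sum_filter_add_sum_filter_not (Dset σ G) (fun i => i + 1 < (p : ℕ)),
      ← Finset.sum_filter_add_sum_filter_not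
        ((Dset σ G).filter (fun i => ¬(i + 1 < (p : ℕ)))) (fun i => i + 1 = (p : ℕ)),
      Finset.filter_filter, Finset.filter_filter]
    congr 2
    · apply Finset.sum_congr _ (fun _ _ => rfl)
      apply Finset.filter_congr
      intro x hx
      constructor
      · rintro ⟨-, h⟩; exact h
      · intro h; exact ⟨by omega, h⟩
    · apply Finset.sum_congr _ (fun _ _ => rfl)
      apply Finset.filter_congr
      intro x hx
      constructor
      · rintro ⟨h1, h2⟩; omega
      · intro h; exact ⟨by omega, by omega⟩
  have hconst : ∑ i ∈ (Dset σ G).filter (fun i => i + 1 = (p : ℕ)), (i + 1) =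
      (p : ℕ) * ((Dset σ G).filter (fun i => i + 1 = (p : ℕ))).card := by
    rw [Finset.sum_congr rfl (fun i hi => (Finset.mem_filter.mp hi).2),
      Finset.sum_const, smul_eq_mul, mul_comm]
  have hE2 : ∑ i ∈ (Dset σ G).filter (fun i => (p : ℕ) ≤ i), (i + 2) =
      (∑ i ∈ (Dset σ G).filter (fun i => (p : ℕ) ≤ i), (i + 1)) +
        ((Dset σ G).filter (fun i => (p : ℕ) ≤ i)).card := by
    have : ∀ i : ℕ, i + 2 = (i + 1) + 1 := fun i => rfl
    rw [Finset.sum_congr rfl (fun i _ => this i), Finset.sum_add_distrib,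
      Finset.sum_const, smul_eq_mul, mul_one]
  have hkey := keyL (S_lt σ G) (D_lt1 σ G) (factA σ G hG) hpm
  have hcval := Cval_eq σ p G hpm
  rw [← hcval] at hkey
  unfold stG
  rw [hinv, hmajt, hmajs, hsplitD, hconst, hE2]
  generalize (p : ℕ) * ((Dset σ G).filter (fun i => i + 1 = (p : ℕ))).card = E at hkey
  omega

lemma Ust_lt : ∀ i ∈ Ust (Sset σ G) (Dset σ G), i < m := by
  intro i hi
  rcases Finset.mem_union.mp hi with h | h
  · exact S_lt σ G i h
  · obtain ⟨j, hj, rfl⟩ := Finset.mem_image.mp h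
    exact D_lt1 σ G j hj

end Stmt6Aux

/-- Insertion lemma: for a Dyck graph `G` on `[m+1]` with restriction `H` to `[m]`,
summing `t^{st_G(τ)}` over the `m+1` permutations `τ` obtained by inserting the
maximal letter into `σ` gives `[m+1]_t · t^{st_H(σ)}`. -/
theorem stmt6 (m : ℕ) (G : SimpleGraph (Fin (m + 1))) (hG : DyckGraph G)
    (σ : Equiv.Perm (Fin m)) :
    ∑ τ : Equiv.Perm (Fin (m + 1)),
        (if Restricts τ σ then (Polynomial.X : Polynomial ℚ) ^ stG G τ else 0) =
      (∑ k ∈ Finset.range (m + 1), (Polynomial.X : Polynomial ℚ) ^ k) *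
        (Polynomial.X : Polynomial ℚ) ^ stG (G.comap Fin.castSucc) σ := by
  rw [Stmt6Aux.sum_restricts σ (fun τ => (Polynomial.X : Polynomial ℚ) ^ stG G τ)]
  calc ∑ p : Fin (m + 1), (Polynomial.X : Polynomial ℚ) ^ stG G (Stmt6Aux.tau σ p)
      = ∑ p : Fin (m + 1),
          (Polynomial.X : Polynomial ℚ) ^
              (Stmt6Aux.cfn m (Stmt6Aux.Sset σ G) (Stmt6Aux.Dset σ G) (p : ℕ)) *
            (Polynomial.X : Polynomial ℚ) ^ stG (G.comap Fin.castSucc) σ := by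
        apply Finset.sum_congr rfl
        intro p _
        rw [Stmt6Aux.st_tau σ p G hG, pow_add, mul_comm]
    _ = (∑ p : Fin (m + 1),
          (Polynomial.X : Polynomial ℚ) ^
            (Stmt6Aux.cfn m (Stmt6Aux.Sset σ G) (Stmt6Aux.Dset σ G) (p : ℕ))) *
          (Polynomial.X : Polynomial ℚ) ^ stG (G.comap Fin.castSucc) σ := by
        rw [Finset.sum_mul]
    _ = (∑ k ∈ Finset.range (m + 1),
          (Polynomial.X : Polynomial ℚ) ^
            (Stmt6Aux.cfn m (Stmt6Aux.Sset σ G) (Stmt6Aux.Dset σ G) k)) *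
          (Polynomial.X : Polynomial ℚ) ^ stG (G.comap Fin.castSucc) σ := by
        rw [Fin.sum_univ_eq_sum_range (fun k =>
          (Polynomial.X : Polynomial ℚ) ^
            (Stmt6Aux.cfn m (Stmt6Aux.Sset σ G) (Stmt6Aux.Dset σ G) k))]
    _ = (∑ k ∈ Finset.range (m + 1), (Polynomial.X : Polynomial ℚ) ^ k) *
          (Polynomial.X : Polynomial ℚ) ^ stG (G.comap Fin.castSucc) σ := by
        rw [Stmt6Aux.sum_pow_cfn (Stmt6Aux.Ust_lt σ G)]
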